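/- Equip I × I with the d-space structure whose directed paths are the continuous maps p : I → I × I both of whose coordinate projections are non-decreasing (this is the product I↑ × I↑ of two directed intervals). This d-space is saturated: every weakly directed path p : I → I × I has both coordinate projections non-decreasing. -/

import Mathlib

open unitInterval Topology Set

/-- Concatenation of two continuous paths `p q : C(I, X)` with `p 1 = q 0`,
traversing `p` on `[0, 1/2]` and `q` on `[1/2, 1]` (both at double speed). -/
noncomputable def concatPath {X : Type*} [TopologicalSpace X]
    (p q : C(unitInterval, X)) (h : p 1 = q 0) : C(unitInterval, X) :=
  ((⟨p, rfl, rfl⟩ : Path (p 0) (p 1)).trans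
    ((⟨q, rfl, rfl⟩ : Path (q 0) (q 1)).cast h rfl)).toContinuousMap

/-- A d-space structure on a topological space `X`: a set of continuous paths
`I → X` containing the constant paths, closed under concatenation and under
precomposition with continuous non-decreasing maps `I → I`. -/
structure DSpace (X : Type*) [TopologicalSpace X] where
  d : Set C(unitInterval, X)
  const_mem : ∀ x : X, ContinuousMap.const unitInterval x ∈ d
  concat_mem : ∀ p ∈ d, ∀ q ∈ d, ∀ h : p 1 = q 0, concatPath p q h ∈ d
  reparam_mem : ∀ p ∈ d, ∀ φ : C(unitInterval, unitInterval), Monotone ⇑φ → p.comp φ ∈ d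

/-- `c` is a directed function on the (open) set `U` for the set of directed
paths `d`: it is continuous on `U` and non-decreasing along every directed path
with image contained in `U`. -/
def IsDirectedFn {X : Type*} [TopologicalSpace X] (d : Set C(unitInterval, X))
    (U : Set X) (c : X → unitInterval) : Prop :=
  ContinuousOn c U ∧ ∀ p ∈ d, Set.range ⇑p ⊆ U → Monotone (c ∘ ⇑p)

/-- A path `p` is weakly directed when, for every directed function `c` on an
open `U`, the map `c ∘ p` is locally non-decreasing on `p ⁻¹' U`. -/
def IsWeaklyDirected {X : Type*} [TopologicalSpace X] (d : Set C(unitInterval, X))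
    (p : C(unitInterval, X)) : Prop :=
  ∀ U : Set X, IsOpen U → ∀ c : X → unitInterval, IsDirectedFn d U c →
    ∀ t : unitInterval, p t ∈ U →
      ∃ V ∈ 𝓝 t, V ⊆ ⇑p ⁻¹' U ∧ MonotoneOn (c ∘ ⇑p) V

/-- The set `d̂X` of weakly directed paths. -/
def satPaths {X : Type*} [TopologicalSpace X] (d : Set C(unitInterval, X)) :
    Set C(unitInterval, X) :=
  {p | IsWeaklyDirected d p}

/-- A set of directed paths is saturated when every weakly directed path is directed. -/
def IsSaturated {X : Type*} [TopologicalSpace X] (d : Set C(unitInterval, X)) : Prop :=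
  satPaths d = d

/-- The product `I↑ × I↑` of two directed intervals: directed paths in `I × I`
are the continuous paths both of whose coordinate projections are non-decreasing. -/
def dIupSq : Set C(unitInterval, unitInterval × unitInterval) :=
  {p | Monotone (fun t => (p t).1) ∧ Monotone (fun t => (p t).2)}

/-- Local-to-global monotonicity on the real line: if `f` is monotone on a small
ball around each point of `[x, y]`, then `f x ≤ f y`. -/
lemma le_of_locallyMono {α : Type*} [Preorder α] {f : ℝ → α} {x y : ℝ} (hxy : x ≤ y)
    (h : ∀ t ∈ Set.Icc x y, ∃ ε > 0, MonotoneOn f (Metric.ball t ε)) : f x ≤ f y := by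
  set S : Set ℝ := {z | z ∈ Set.Icc x y ∧ f x ≤ f z} with hSdef
  have hxS : x ∈ S := ⟨⟨le_refl x, hxy⟩, le_refl _⟩
  have hbdd : BddAbove S := ⟨y, fun z hz => hz.1.2⟩
  have hne : S.Nonempty := ⟨x, hxS⟩
  set s := sSup S with hs
  have hsx : x ≤ s := le_csSup hbdd hxS
  have hsy : s ≤ y := csSup_le hne (fun z hz => hz.1.2)
  obtain ⟨ε, hε, hmono⟩ := h s ⟨hsx, hsy⟩
  have hsS : s ∈ S := by
    obtain ⟨z, hzS, hz⟩ := exists_lt_of_lt_csSup hne (by linarith : s - ε < s)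
    have hzs : z ≤ s := le_csSup hbdd hzS
    have hz1 : z ∈ Metric.ball s ε := by
      rw [Metric.mem_ball, Real.dist_eq, abs_lt]; constructor <;> linarith
    exact ⟨⟨hsx, hsy⟩, hzS.2.trans (hmono hz1 (Metric.mem_ball_self hε) hzs)⟩
  rcases eq_or_lt_of_le hsy with heq | hlt
  · exact heq ▸ hsS.2
  · exfalso
    set s' := min y (s + ε/2) with hs'
    have h1 : s < s' := lt_min hlt (by linarith)
    have h2 : s' ∈ Metric.ball s ε := by
      have := min_le_right y (s + ε/2)
      rw [Metric.mem_ball, Real.dist_eq, abs_lt]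
      constructor <;> linarith
    have hs'S : s' ∈ S :=
      ⟨⟨hsx.trans h1.le, min_le_left _ _⟩,
        hsS.2.trans (hmono (Metric.mem_ball_self hε) h2 h1.le)⟩
    exact absurd (le_csSup hbdd hs'S) (not_le.mpr h1)

/-- A locally monotone function on the unit interval is monotone. -/
lemma monotone_of_locally {α : Type*} [Preorder α] {f : unitInterval → α}
    (h : ∀ t : unitInterval, ∃ V ∈ 𝓝 t, MonotoneOn f V) : Monotone f := by
  intro x y hxy
  set g : ℝ → α := fun r => f (Set.projIcc 0 1 zero_le_one r) with hg
  have key : ∀ t ∈ Set.Icc (x:ℝ) y, ∃ ε > 0, MonotoneOn g (Metric.ball t ε) := by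
    intro t ht
    have ht01 : t ∈ Set.Icc (0:ℝ) 1 := ⟨x.2.1.trans ht.1, ht.2.trans y.2.2⟩
    obtain ⟨V, hV, hmono⟩ := h ⟨t, ht01⟩
    obtain ⟨ε, hε, hball⟩ := Metric.mem_nhds_iff.mp hV
    refine ⟨ε, hε, ?_⟩
    have hmap : ∀ r ∈ Metric.ball t ε, Set.projIcc 0 1 zero_le_one r ∈ V := by
      intro r hr
      apply hball
      rw [Metric.mem_ball] at hr ⊢
      calc dist (Set.projIcc 0 1 zero_le_one r) (⟨t, ht01⟩ : unitInterval)
          = dist (Set.projIcc 0 1 zero_le_one r) (Set.projIcc 0 1 zero_le_one t) := by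
            rw [Set.projIcc_val zero_le_one ⟨t, ht01⟩]
        _ ≤ 1 * dist r t := (LipschitzWith.projIcc zero_le_one).dist_le_mul r t
        _ < ε := by rwa [one_mul]
    intro a ha b hb hab
    exact hmono (hmap a ha) (hmap b hb) (monotone_projIcc zero_le_one hab)
  have hres := le_of_locallyMono (show (x:ℝ) ≤ y from hxy) key
  simpa [hg, Set.projIcc_val zero_le_one] using hres

/-- The product `I↑ × I↑` of two directed intervals is saturated: the weakly
directed paths are exactly those whose coordinate projections are non-decreasing. -/
theorem stmt_9 : IsSaturated dIupSq := by
  apply Set.Subset.antisymm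
  · -- weakly directed ⊆ directed
    intro p hp
    constructor
    · apply monotone_of_locally
      intro t
      obtain ⟨V, hV, _, hmono⟩ := hp Set.univ isOpen_univ (fun x => x.1)
        ⟨continuous_fst.continuousOn, fun q hq _ => hq.1⟩ t (Set.mem_univ _)
      exact ⟨V, hV, hmono⟩
    · apply monotone_of_locally
      intro t
      obtain ⟨V, hV, _, hmono⟩ := hp Set.univ isOpen_univ (fun x => x.2)
        ⟨continuous_snd.continuousOn, fun q hq _ => hq.2⟩ t (Set.mem_univ _)
      exact ⟨V, hV, hmono⟩
  · -- directed ⊆ weakly directed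
    intro p hp U hU c hc t htU
    have hopen : IsOpen (⇑p ⁻¹' U) := hU.preimage p.continuous
    obtain ⟨ε, hε, hball⟩ := Metric.mem_nhds_iff.mp (hopen.mem_nhds htU)
    set a : ℝ := max 0 ((t:ℝ) - ε/2) with ha
    set b : ℝ := min 1 ((t:ℝ) + ε/2) with hb
    have ht0 : (0:ℝ) ≤ t := t.2.1
    have ht1 : (t:ℝ) ≤ 1 := t.2.2
    have ha0 : 0 ≤ a := le_max_left _ _
    have hb1 : b ≤ 1 := min_le_left _ _
    have hab : a < b := by
      apply max_lt <;> apply lt_min <;> linarith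
    set V : Set unitInterval := {u | a ≤ (u:ℝ) ∧ (u:ℝ) ≤ b} with hVdef
    have hVmem : ∀ u : unitInterval, a ≤ (u:ℝ) → (u:ℝ) ≤ b → u ∈ V := fun u h1 h2 => ⟨h1, h2⟩
    have hVsub : V ⊆ ⇑p ⁻¹' U := by
      intro u hu
      apply hball
      have h1 : (t:ℝ) - ε/2 ≤ u := le_trans (le_max_right _ _) hu.1
      have h2 : (u:ℝ) ≤ (t:ℝ) + ε/2 := le_trans hu.2 (min_le_right _ _)
      rw [Metric.mem_ball, Subtype.dist_eq, Real.dist_eq, abs_lt]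
      constructor <;> linarith
    have hVnhds : V ∈ 𝓝 t := by
      apply Filter.mem_of_superset (Metric.ball_mem_nhds t (by linarith : (0:ℝ) < ε/2))
      intro u hu
      rw [Metric.mem_ball, Subtype.dist_eq, Real.dist_eq, abs_lt] at hu
      exact ⟨max_le u.2.1 (by linarith), le_min u.2.2 (by linarith)⟩
    refine ⟨V, hVnhds, hVsub, ?_⟩
    -- the affine reparametrisation of [0,1] onto [a,b]
    have hmemI : ∀ s : unitInterval, a + (s:ℝ) * (b - a) ∈ Set.Icc (0:ℝ) 1 := by
      intro s
      constructor
      · nlinarith [s.2.1, s.2.2]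
      · nlinarith [s.2.1, s.2.2]
    set φ : C(unitInterval, unitInterval) :=
      ⟨fun s => ⟨a + (s:ℝ) * (b - a), hmemI s⟩, by
        apply Continuous.subtype_mk
        exact continuous_const.add (continuous_subtype_val.mul continuous_const)⟩ with hφ
    have hφmono : Monotone ⇑φ := by
      intro s s' hss
      simp only [hφ, ContinuousMap.coe_mk, Subtype.mk_le_mk]
      have : (s:ℝ) ≤ s' := hss
      nlinarith
    have hφV : ∀ s : unitInterval, φ s ∈ V := by
      intro s
      refine ⟨?_, ?_⟩ <;> simp only [hφ, ContinuousMap.coe_mk] <;> nlinarith [s.2.1, s.2.2]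
    have hq : p.comp φ ∈ dIupSq := by
      refine ⟨fun s s' hss => ?_, fun s s' hss => ?_⟩
      · exact hp.1 (hφmono hss)
      · exact hp.2 (hφmono hss)
    have hrange : Set.range ⇑(p.comp φ) ⊆ U := by
      rintro _ ⟨s, rfl⟩
      exact hVsub (hφV s)
    have hmono := hc.2 _ hq hrange
    intro u hu v hv huv
    have hba : (0:ℝ) < b - a := by linarith
    have hmem' : ∀ w : unitInterval, w ∈ V → ((w:ℝ) - a) / (b - a) ∈ Set.Icc (0:ℝ) 1 := by
      intro w hw
      constructor
      · apply div_nonneg _ hba.le; linarith [hw.1]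
      · rw [div_le_one hba]; linarith [hw.2]
    set su : unitInterval := ⟨((u:ℝ) - a) / (b - a), hmem' u hu⟩
    set sv : unitInterval := ⟨((v:ℝ) - a) / (b - a), hmem' v hv⟩
    have hsusv : su ≤ sv := by
      have huv' : (u:ℝ) ≤ v := huv
      show ((u:ℝ) - a) / (b - a) ≤ ((v:ℝ) - a) / (b - a)
      gcongr

    have hφu : φ su = u := by
      apply Subtype.ext
      simp only [hφ, ContinuousMap.coe_mk]
      show a + ((u:ℝ) - a) / (b - a) * (b - a) = u
      rw [div_mul_cancel₀ _ hba.ne']; ring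
    have hφv : φ sv = v := by
      apply Subtype.ext
      simp only [hφ, ContinuousMap.coe_mk]
      show a + ((v:ℝ) - a) / (b - a) * (b - a) = v
      rw [div_mul_cancel₀ _ hba.ne']; ring
    have := hmono hsusv
    simpa [Function.comp, ContinuousMap.comp_apply, hφu, hφv] using this
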